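/- For every sequence φ = (φ_i)_{i≥1} of real numbers and every n ≥ 0, the generalized Bell polynomials satisfy the recurrence Be_{n+1}^φ(x) = x·(Be_n^φ(x) + (Be_n^φ)'(x)) + φ_{n+1}·Be_n^φ(x), with Be_0^φ = 1. -/
import Mathlib


open Polynomial

/-- The Bell polynomials: `Bell 0 = 1`, `Bell (n+1) = x·(Bell n + (Bell n)')`. -/
noncomputable def Bell : ℕ → Polynomial ℝ
  | 0 => 1
  | n + 1 => X * (Bell n + derivative (Bell n))

/-- `Phi φ n i` is the elementary symmetric polynomial of degree `i` in `φ 1, …, φ n`. -/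
noncomputable def Phi (φ : ℕ → ℝ) (n i : ℕ) : ℝ :=
  ∑ s ∈ Finset.powersetCard i (Finset.Icc 1 n), ∏ j ∈ s, φ j

/-- The generalized Bell polynomial `Be_n^φ = ∑_{j=0}^n Φ^n_{n-j} Be_j`. -/
noncomputable def genBell (φ : ℕ → ℝ) (n : ℕ) : Polynomial ℝ :=
  ∑ j ∈ Finset.range (n + 1), C (Phi φ n (n - j)) * Bell j

/-- The sequence `φ^{{l}}` obtained from `φ` by removing its `l`-th term
(sequences indexed from 1). -/
def removeIdx (φ : ℕ → ℝ) (l : ℕ) (i : ℕ) : ℝ := if i < l then φ i else φ (i + 1)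

/-- The sequence `φ^{l,M}`, obtained by adding `M` to the `l`-th term of `φ`. -/
def addAt (φ : ℕ → ℝ) (l : ℕ) (M : ℝ) (i : ℕ) : ℝ := φ i + if i = l then M else 0

/-- A finite set `U` of reals interlaces a finite set `V` if between any two consecutive
elements of `U` there lies exactly one element of `V`, and either `|U| = |V| + 1`, or
`|U| = |V|` and `max U < max V`. -/
def Interlaces (U V : Finset ℝ) : Prop :=
  (∀ u₁ ∈ U, ∀ u₂ ∈ U, u₁ < u₂ → (∀ u ∈ U, ¬(u₁ < u ∧ u < u₂)) →
    ∃! v, v ∈ V ∧ u₁ < v ∧ v < u₂) ∧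
  (U.card = V.card + 1 ∨ (U.card = V.card ∧ U.max < V.max))

/-- `zeta φ n k` is the `k`-th zero (in increasing order, `k` counted from 1) of the
generalized Bell polynomial `Be_n^φ`. -/
noncomputable def zeta (φ : ℕ → ℝ) (n k : ℕ) : ℝ :=
  ((genBell φ n).roots.toFinset.sort (· ≤ ·)).getD (k - 1) 0

lemma Phi_zero (φ : ℕ → ℝ) (n : ℕ) : Phi φ n 0 = 1 := by simp [Phi]

lemma Phi_gt (φ : ℕ → ℝ) {n i : ℕ} (h : n < i) : Phi φ n i = 0 := by
  unfold Phi
  rw [Finset.powersetCard_eq_empty.2 (by simpa using h), Finset.sum_empty]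

lemma Phi_succ (φ : ℕ → ℝ) (n i : ℕ) :
    Phi φ (n+1) (i+1) = Phi φ n (i+1) + φ (n+1) * Phi φ n i := by
  have h : (n+1) ∉ Finset.Icc 1 n := by simp
  have hIcc : Finset.Icc 1 (n+1) = insert (n+1) (Finset.Icc 1 n) := by
    ext x; simp; omega
  unfold Phi
  rw [hIcc, Finset.powersetCard_succ_insert h, Finset.sum_union, Finset.sum_image]
  · congr 1
    rw [Finset.mul_sum]
    refine Finset.sum_congr rfl fun s hs => ?_
    rw [Finset.prod_insert fun hmem => h ((Finset.mem_powersetCard.1 hs).1 hmem)]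
  · intro s hs t ht hst
    have hs' : (n+1) ∉ s := fun hm => h ((Finset.mem_powersetCard.1 hs).1 hm)
    have ht' : (n+1) ∉ t := fun hm => h ((Finset.mem_powersetCard.1 ht).1 hm)
    have := congrArg (Finset.erase · (n+1)) hst
    simpa [Finset.erase_insert hs', Finset.erase_insert ht'] using this
  · rw [Finset.disjoint_right]
    intro s hs hs2
    obtain ⟨t, ht, rfl⟩ := Finset.mem_image.1 hs
    exact (fun hm => h ((Finset.mem_powersetCard.1 hs2).1 hm)) (Finset.mem_insert_self _ _)

/-- the recurrence `Be_{n+1}^φ = x·(Be_n^φ + (Be_n^φ)') + φ_{n+1}·Be_n^φ`,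
with `Be_0^φ = 1`. -/
theorem genBell_recurrence (φ : ℕ → ℝ) (n : ℕ) :
    genBell φ 0 = 1 ∧
    genBell φ (n + 1) =
      X * (genBell φ n + derivative (genBell φ n)) + C (φ (n + 1)) * genBell φ n := by
  constructor
  · simp [genBell, Phi_zero, Bell]
  · have hR : X * (genBell φ n + derivative (genBell φ n)) =
        ∑ j ∈ Finset.range (n+1), C (Phi φ n (n - j)) * Bell (j+1) := by
      unfold genBell
      rw [derivative_sum, ← Finset.sum_add_distrib, Finset.mul_sum]
      refine Finset.sum_congr rfl fun j _ => ?_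
      rw [derivative_C_mul, show Bell (j+1) = X * (Bell j + derivative (Bell j)) from rfl]
      ring
    rw [hR]
    unfold genBell
    rw [Finset.mul_sum, Finset.sum_range_succ' (fun j => C (Phi φ (n+1) (n+1-j)) * Bell j)]
    simp only [Nat.succ_sub_succ, Nat.sub_zero, Nat.sub_self]
    rw [Finset.sum_range_succ' (fun j => C (φ (n+1)) * (C (Phi φ n (n-j)) * Bell j))]
    rw [Finset.sum_range_succ (fun j => C (Phi φ (n+1) (n-j)) * Bell (j+1))]
    rw [Finset.sum_range_succ (fun j => C (Phi φ n (n-j)) * Bell (j+1))]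
    simp only [Nat.sub_self, Nat.succ_sub_succ]
    have key : ∀ j ∈ Finset.range n, C (Phi φ (n+1) (n-j)) * Bell (j+1) =
        C (Phi φ n (n-j)) * Bell (j+1) + C (φ (n+1)) * (C (Phi φ n (n-(j+1))) * Bell (j+1)) := by
      intro j hj
      have hj' : j < n := Finset.mem_range.1 hj
      have h1 : n - j = (n - (j+1)) + 1 := by omega
      rw [h1, Phi_succ]
      rw [C_add, C_mul]
      ring
    rw [Finset.sum_congr rfl key, Finset.sum_add_distrib]
    have h2 : Phi φ (n+1) (n+1) = φ (n+1) * Phi φ n n := by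
      rw [show n + 1 = n + 1 from rfl, Phi_succ, Phi_gt φ (Nat.lt_succ_self n), zero_add]
    rw [h2, Phi_zero, Phi_zero]
    simp only [Bell, C_mul, Nat.sub_zero]
    ring
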